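/- arXiv:1703.04834 — 6 statements merged into one kernel-verified Lean document; each statement's English description precedes it below -/
import Mathlib

section
/- For every weak deterministic Büchi automaton 𝒜 over a finite alphabet A such that every state of 𝒜 equals δ(q₀,u) for some finite word u, there exist a weak deterministic Büchi automaton 𝒜' over A that is minimal and all of whose states equal δ'(q₀',u) for some finite word u, together with a surjective map μ from the states of 𝒜 onto the states of 𝒜' such that μ(q₀) = q₀' and L(𝒜_q) = L(𝒜'_{μ(q)}) for every state q of 𝒜; in particular L(𝒜') = L(𝒜). -/
/-- A deterministic Büchi automaton over alphabet `A` with states `Q`. -/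
structure DBA (A : Type) (Q : Type) where
  delta : Q → A → Q
  init : Q
  F : Set Q

namespace DBA

variable {A Q : Type}

/-- The transition function extended to finite words. -/
def deltaStar (M : DBA A Q) : Q → List A → Q
  | q, [] => q
  | q, a :: u => deltaStar M (M.delta q a) u

/-- The run of `M` on the infinite word `w`. -/
def run (M : DBA A Q) (w : ℕ → A) : ℕ → Q
  | 0 => M.init
  | n + 1 => M.delta (run M w n) (w n)

/-- `M` accepts `w` if some accepting state occurs infinitely often in the run. -/
def Accepts (M : DBA A Q) (w : ℕ → A) : Prop :=
  ∃ q ∈ M.F, ∀ N : ℕ, ∃ n, N ≤ n ∧ run M w n = q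

/-- The ω-language of `M`. -/
def Lang (M : DBA A Q) : Set (ℕ → A) := {w | M.Accepts w}

/-- `M` with initial state changed to `q`. -/
def start (M : DBA A Q) (q : Q) : DBA A Q := { M with init := q }

/-- `q'` is accessible from `q` (by a nonempty word). -/
def Reach (M : DBA A Q) (q q' : Q) : Prop :=
  ∃ u : List A, u ≠ [] ∧ deltaStar M q u = q'

/-- `M` is weak: `F` is a union of strongly connected components. -/
def Weak (M : DBA A Q) : Prop :=
  ∀ q ∈ M.F, ∀ q', M.Reach q q' → M.Reach q' q → q' ∈ M.F

/-- `M` is minimal: distinct states recognize distinct languages. -/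
def Minimal (M : DBA A Q) : Prop :=
  ∀ q q' : Q, q ≠ q' → (M.start q).Lang ≠ (M.start q').Lang

end DBA

/-- Concatenation of a finite word and an infinite word. -/
def cat {A : Type} (u : List A) (w : ℕ → A) : ℕ → A :=
  fun n => if h : n < u.length then u.get ⟨n, h⟩ else w (n - u.length)

/-- The value `⟨v⟩ = Σ_{i<|v|} v[i]·b^(|v|-1-i)` of a finite digit word. -/
noncomputable def natVal (b : ℕ) (v : List (Fin b)) : ℝ :=
  ∑ i : Fin v.length, ((v.get i : ℕ) : ℝ) * (b : ℝ) ^ (v.length - 1 - (i : ℕ))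

/-- The fractional value `⟨w⟩_f = Σ_{i≥0} w[i]·b^(-i-1)` of an infinite digit word. -/
noncomputable def fracVal (b : ℕ) (w : ℕ → Fin b) : ℝ :=
  ∑' i : ℕ, ((w i : ℕ) : ℝ) * (b : ℝ) ^ (-(i : ℤ) - 1)

/-- The word `𝐮⋆𝐰` over `Σ^d ∪ {⋆}`; `none` is the separator `⋆`. -/
def encWord {b d : ℕ} (u : List (Fin d → Fin b)) (w : ℕ → Fin d → Fin b) :
    ℕ → Option (Fin d → Fin b) :=
  cat (u.map some ++ [none]) (fun n => some (w n))

/-- The vector of reals encoded by `𝐮⋆𝐰`. -/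
noncomputable def vecVal {b d : ℕ} (u : List (Fin d → Fin b)) (w : ℕ → Fin d → Fin b) :
    Fin d → ℝ :=
  fun i => natVal b (u.map fun t => t i) + fracVal b (fun n => w n i)

/-- A language of words over `Σ^d ∪ {⋆}` is saturated if membership only depends on
the encoded vector of reals. -/
def Saturated {b d : ℕ} (L : Set (ℕ → Option (Fin d → Fin b))) : Prop :=
  ∀ (u : List (Fin d → Fin b)) (w : ℕ → Fin d → Fin b)
    (u' : List (Fin d → Fin b)) (w' : ℕ → Fin d → Fin b),
    vecVal u w = vecVal u' w' → encWord u w ∈ L → encWord u' w' ∈ L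

/-- The parallelization `par(𝒜)` of an automaton over `Σ ∪ {⋆}`. -/
def parDBA {Q : Type} {b : ℕ} (d : ℕ) (M : DBA (Option (Fin b)) Q) :
    DBA (Option (Fin d → Fin b)) Q where
  delta := fun q x =>
    match x with
    | none => M.delta q none
    | some t => M.deltaStar q (List.ofFn fun i => some (t i))
  init := M.init
  F := M.F

/-- Fill the `f`-th component of a tuple of `Σ^□_f` with the digit `z`. -/
def fixTuple {b d : ℕ} (f : Fin d) (z : Fin b) (t : {i : Fin d // i ≠ f} → Fin b) :
    Fin d → Fin b :=
  fun i => if h : i = f then z else t ⟨i, h⟩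

/-- The automaton `𝒜^{z@f}` over `Σ^□_f ∪ {⋆}`; a letter of `Σ^□_f` is represented by
its tuple of non-`f` components (the `f`-th component being `□`). -/
def fixDBA {Q : Type} {b d : ℕ} (M : DBA (Option (Fin d → Fin b)) Q) (f : Fin d) (z : Fin b) :
    DBA (Option ({i : Fin d // i ≠ f} → Fin b)) Q where
  delta := fun q x =>
    match x with
    | none => M.delta q none
    | some t => M.delta q (some (fixTuple f z t))
  init := M.init
  F := M.F

/-- `fix_{□@f}(𝐰)`: replace the `f`-th component of every non-`⋆` letter by `□`. -/
def eraseComp {b d : ℕ} (f : Fin d) (w : ℕ → Option (Fin d → Fin b)) :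
    ℕ → Option ({i : Fin d // i ≠ f} → Fin b) :=
  fun n => (w n).map fun t i => t i.val

/-- `fix_{z@f}(𝐰)`: replace the `f`-th component (`□`) of every non-`⋆` letter by `z`. -/
def fillComp {b d : ℕ} (f : Fin d) (z : Fin b) (w : ℕ → Option ({i : Fin d // i ≠ f} → Fin b)) :
    ℕ → Option (Fin d → Fin b) :=
  fun n => (w n).map (fixTuple f z)

/-- The automaton `𝒜^{seq z}`, over alphabet `Σ ∪ {□,⋆}` (here `none` is `⋆` and
`some none` is `□`), with states `(Q × {0,…,d−1}) ∪ {⊥}` (`none` is `⊥`). -/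
def seqDBA {Q : Type} {b : ℕ} (d : ℕ) (hd : 0 < d) (M : DBA (Option (Fin b)) Q) (z : Fin b) :
    DBA (Option (Option (Fin b))) (Option (Q × Fin d)) where
  delta := fun s x =>
    match s, x with
    | none, _ => none
    | some (q, i), none => some (M.delta q none, i)
    | some (q, i), some (some a) =>
        if h : (i : ℕ) + 1 < d then some (M.delta q (some a), ⟨(i : ℕ) + 1, h⟩) else none
    | some (q, i), some none =>
        if (i : ℕ) = d - 1 then some (M.delta q (some z), ⟨0, hd⟩) else none
  init := some (M.init, ⟨0, hd⟩)
  F := {s | ∃ q ∈ M.F, ∃ i : Fin d, s = some (q, i)}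

/-- Auxiliary function for flattening an infinite word of blocks:
`flatAux blk v n` is the pair (block index, offset inside the block) of position `n`. -/
def flatAux {A B : Type} (blk : A → List B) (v : ℕ → A) : ℕ → ℕ × ℕ
  | 0 => (0, 0)
  | n + 1 =>
      let p := flatAux blk v n
      if p.2 + 1 < (blk (v p.1)).length then (p.1, p.2 + 1) else (p.1 + 1, 0)

/-- Flattening of an infinite word of (nonempty) blocks. -/
def flatten {A B : Type} [Inhabited B] (blk : A → List B) (v : ℕ → A) : ℕ → B :=
  fun n => (blk (v (flatAux blk v n).1)).getD (flatAux blk v n).2 default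

/-- The block of a letter of `Σ^d ∪ {⋆}`: a `d`-tuple becomes its list of components,
`⋆` stays a single letter. -/
def parBlock {b d : ℕ} : Option (Fin d → Fin b) → List (Option (Fin b))
  | none => [none]
  | some t => List.ofFn fun i => some (t i)

/-- `seq(𝐯)`: the sequentialization of an infinite word over `Σ^d ∪ {⋆}`. -/
def seqWord {b d : ℕ} (v : ℕ → Option (Fin d → Fin b)) : ℕ → Option (Fin b) :=
  flatten parBlock v

/-- The block of a letter of `Σ^□_f ∪ {⋆}`, as a word over `Σ ∪ {□,⋆}`. -/
def sqBlock {b d : ℕ} (f : Fin d) :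
    Option ({i : Fin d // i ≠ f} → Fin b) → List (Option (Option (Fin b)))
  | none => [none]
  | some t => List.ofFn fun i : Fin d =>
      if h : i = f then some none else some (some (t ⟨i, h⟩))

/-- Number of non-`⋆` letters among the first `n` letters of `w`. -/
def digitCount {b : ℕ} (w : ℕ → Option (Fin b)) : ℕ → ℕ
  | 0 => 0
  | n + 1 => digitCount w n + (if w n = none then 0 else 1)

namespace MWaux

open DBA

variable {A Q : Type}

lemma deltaStar_append (M : DBA A Q) (q : Q) (u v : List A) :
    M.deltaStar q (u ++ v) = M.deltaStar (M.deltaStar q u) v := by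
  induction u generalizing q with
  | nil => rfl
  | cons a u ih => simpa [DBA.deltaStar] using ih (M.delta q a)

lemma deltaStar_start (M : DBA A Q) (p q : Q) (u : List A) :
    (M.start p).deltaStar q u = M.deltaStar q u := by
  induction u generalizing q with
  | nil => rfl
  | cons a u ih => simpa [DBA.deltaStar, DBA.start] using ih _

lemma reach_start (M : DBA A Q) (p : Q) {a b : Q} :
    (M.start p).Reach a b ↔ M.Reach a b := by
  unfold DBA.Reach
  simp only [deltaStar_start]

lemma reach_trans (M : DBA A Q) {a b c : Q} (h1 : M.Reach a b) (h2 : M.Reach b c) :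
    M.Reach a c := by
  obtain ⟨u, hu, hdu⟩ := h1; obtain ⟨v, hv, hdv⟩ := h2
  exact ⟨u ++ v, by simp [hu], by rw [deltaStar_append, hdu, hdv]⟩

/-- the segment `w[n..m)` -/
def seg (w : ℕ → A) (n m : ℕ) : List A := (List.range (m - n)).map (fun i => w (n + i))

lemma seg_nonempty (w : ℕ → A) {n m : ℕ} (h : n < m) : seg w n m ≠ [] := by
  intro he
  have h2 : (seg w n m).length = m - n := by simp [seg]
  rw [he] at h2
  simp at h2
  omega

lemma run_seg (M : DBA A Q) (w : ℕ → A) {n m : ℕ} (h : n ≤ m) :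
    M.run w m = M.deltaStar (M.run w n) (seg w n m) := by
  induction m with
  | zero =>
    have : n = 0 := by omega
    subst this
    rfl
  | succ m ih =>
    rcases Nat.lt_or_ge n (m + 1) with h2 | h2
    · have hnm : n ≤ m := by omega
      have hseg : seg w n (m + 1) = seg w n m ++ [w m] := by
        have e1 : m + 1 - n = (m - n) + 1 := by omega
        have e2 : n + (m - n) = m := by omega
        simp [seg, e1, List.range_succ, e2]
      rw [hseg, deltaStar_append, ← ih hnm]
      rfl
    · have hn : n = m + 1 := by omega
      subst hn
      have hs : seg w (m + 1) (m + 1) = [] := by simp [seg]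
      rw [hs]
      rfl

lemma reach_of_run (M : DBA A Q) (w : ℕ → A) {n m : ℕ} (h : n < m) :
    M.Reach (M.run w n) (M.run w m) :=
  ⟨seg w n m, seg_nonempty w h, (run_seg M w h.le).symm⟩

/-- the periodic word `u^ω` -/
def per (u : List A) (h : u ≠ []) : ℕ → A :=
  fun n => u.get ⟨n % u.length, Nat.mod_lt _ (List.length_pos_iff.mpr h)⟩

lemma seg_per (u : List A) (h : u ≠ []) (k : ℕ) :
    seg (per u h) (k * u.length) (k * u.length + u.length) = u := by
  apply List.ext_getElem
  · simp [seg]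
  · intro i h1 h2
    simp only [seg, Nat.add_sub_cancel_left, List.getElem_map, List.getElem_range, per]
    simp only [List.get_eq_getElem]
    congr 1
    have hi : i < u.length := h2
    rw [Nat.add_comm, Nat.add_mul_mod_self_right, Nat.mod_eq_of_lt hi]

lemma run_per_mul (M : DBA A Q) (r : Q) (u : List A) (h : u ≠ []) (k : ℕ) :
    (M.start r).run (per u h) (k * u.length) = (fun s => M.deltaStar s u)^[k] r := by
  induction k with
  | zero => rw [Nat.zero_mul]; rfl
  | succ k ih =>
    have h1 : (k + 1) * u.length = k * u.length + u.length := by ring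
    rw [h1, run_seg _ _ (Nat.le_add_right _ _), seg_per, ih, Function.iterate_succ_apply',
      deltaStar_start]

lemma run_per_cycle (M : DBA A Q) (q : Q) (u : List A) (h : u ≠ []) (hc : M.deltaStar q u = q)
    (k : ℕ) : (M.start q).run (per u h) (k * u.length) = q := by
  rw [run_per_mul]
  exact Function.iterate_fixed hc k

lemma inf_per_cycle (M : DBA A Q) (q : Q) (u : List A) (h : u ≠ []) (hc : M.deltaStar q u = q) :
    ∀ N : ℕ, ∃ n, N ≤ n ∧ (M.start q).run (per u h) n = q := by
  intro N
  refine ⟨N * u.length, ?_, run_per_cycle M q u h hc N⟩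
  have h1 : 1 ≤ u.length := List.length_pos_iff.mpr h
  calc N = N * 1 := (Nat.mul_one N).symm
    _ ≤ N * u.length := Nat.mul_le_mul_left N h1

lemma mem_F_of_inf (M : DBA A Q) (hweak : M.Weak) {r : Q} {w : ℕ → A} {t : Q}
    (hs : ∀ N, ∃ n, N ≤ n ∧ (M.start r).run w n = t)
    (hacc : (M.start r).Accepts w) : t ∈ M.F := by
  obtain ⟨f, hfF, hf⟩ := hacc
  obtain ⟨n1, _, hn1⟩ := hf 0
  obtain ⟨m, hm, hmr⟩ := hs (n1 + 1)
  obtain ⟨n2, hn2, hn2r⟩ := hf (m + 1)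
  have r1 : M.Reach f t := by
    have := (reach_start M r).mp (reach_of_run (M.start r) w (show n1 < m by omega))
    rwa [hn1, hmr] at this
  have r2 : M.Reach t f := by
    have := (reach_start M r).mp (reach_of_run (M.start r) w (show m < n2 by omega))
    rwa [hmr, hn2r] at this
  exact hweak f hfF t r1 r2

lemma accepts_per (M : DBA A Q) {q : Q} (hq : q ∈ M.F) {u : List A} (h : u ≠ [])
    (hc : M.deltaStar q u = q) : (M.start q).Accepts (per u h) :=
  ⟨q, hq, inf_per_cycle M q u h hc⟩

lemma not_accepts_per (M : DBA A Q) (hweak : M.Weak) {q : Q} (hq : q ∉ M.F) {u : List A}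
    (h : u ≠ []) (hc : M.deltaStar q u = q) : ¬ (M.start q).Accepts (per u h) :=
  fun hacc => hq (mem_F_of_inf M hweak (inf_per_cycle M q u h hc) hacc)

lemma run_cons (M : DBA A Q) (q : Q) (a : A) (w : ℕ → A) (n : ℕ) :
    (M.start q).run (cat [a] w) (n + 1) = (M.start (M.delta q a)).run w n := by
  induction n with
  | zero =>
    show (M.start q).delta ((M.start q).run (cat [a] w) 0) (cat [a] w 0) = M.delta q a
    simp [DBA.run, DBA.start, cat]
  | succ n ih =>
    show (M.start q).delta ((M.start q).run (cat [a] w) (n + 1)) (cat [a] w (n + 1))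
        = (M.start (M.delta q a)).delta ((M.start (M.delta q a)).run w n) (w n)
    have hc : cat [a] w (n + 1) = w n := by simp [cat]
    rw [ih, hc]
    rfl

lemma accepts_cons (M : DBA A Q) (q : Q) (a : A) (w : ℕ → A) :
    (M.start q).Accepts (cat [a] w) ↔ (M.start (M.delta q a)).Accepts w := by
  constructor
  · rintro ⟨f, hf, hinf⟩
    refine ⟨f, hf, fun N => ?_⟩
    obtain ⟨n, hn, he⟩ := hinf (N + 1)
    obtain ⟨m, rfl⟩ : ∃ m, n = m + 1 := ⟨n - 1, by omega⟩
    exact ⟨m, by omega, by rw [← run_cons]; exact he⟩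
  · rintro ⟨f, hf, hinf⟩
    refine ⟨f, hf, fun N => ?_⟩
    obtain ⟨n, hn, he⟩ := hinf N
    exact ⟨n + 1, by omega, by rw [run_cons]; exact he⟩

lemma congr_delta (M : DBA A Q) {q r : Q}
    (h : (M.start q).Lang = (M.start r).Lang) (a : A) :
    (M.start (M.delta q a)).Lang = (M.start (M.delta r a)).Lang := by
  ext w
  have h2 : (M.start q).Accepts (cat [a] w) ↔ (M.start r).Accepts (cat [a] w) :=
    Set.ext_iff.mp h (cat [a] w)
  constructor
  · intro hw
    exact (accepts_cons M r a w).mp (h2.mp ((accepts_cons M q a w).mpr hw))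
  · intro hw
    exact (accepts_cons M q a w).mp (h2.mpr ((accepts_cons M r a w).mpr hw))

lemma congr_deltaStar (M : DBA A Q) {q r : Q}
    (h : (M.start q).Lang = (M.start r).Lang) (u : List A) :
    (M.start (M.deltaStar q u)).Lang = (M.start (M.deltaStar r u)).Lang := by
  induction u generalizing q r with
  | nil => exact h
  | cons a u ih => exact ih (congr_delta M h a)

lemma iterate_lang (M : DBA A Q) {q r : Q} {v : List A}
    (hq : (M.start (M.deltaStar q v)).Lang = (M.start q).Lang)
    (hr : (M.start r).Lang = (M.start q).Lang) (m : ℕ) :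
    (M.start ((fun t => M.deltaStar t v)^[m] r)).Lang = (M.start q).Lang := by
  induction m with
  | zero => exact hr
  | succ m ih =>
    rw [Function.iterate_succ_apply']
    exact (congr_deltaStar M ih v).trans hq

lemma reach_iterate (M : DBA A Q) {v : List A} (hv : v ≠ []) (t : Q) :
    ∀ m, 1 ≤ m → M.Reach t ((fun x => M.deltaStar x v)^[m] t) := by
  intro m
  induction m with
  | zero => omega
  | succ m ih =>
    intro _
    rw [Function.iterate_succ_apply']
    rcases Nat.eq_zero_or_pos m with hm | hm
    · subst hm
      exact ⟨v, hv, rfl⟩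
    · exact reach_trans M (ih hm) ⟨v, hv, rfl⟩

lemma step_to_F (M : DBA A Q) (hweak : M.Weak) {q r : Q} (hqF : q ∈ M.F)
    (hqc : M.Reach q q) (hL : (M.start r).Lang = (M.start q).Lang) :
    ∃ r', r' ∈ M.F ∧ (M.start r').Lang = (M.start q).Lang ∧ M.Reach r r' ∧ M.Reach r' r' := by
  obtain ⟨u, hu, hcyc⟩ := hqc
  set w := per u hu with hw
  have haq : (M.start q).Accepts w := accepts_per M hqF hu hcyc
  have har : (M.start r).Accepts w := (Set.ext_iff.mp hL w).mpr haq
  obtain ⟨f, hfF, hf⟩ := har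
  obtain ⟨n0, _, hn0⟩ := hf 0
  have hlen : 1 ≤ u.length := List.length_pos_iff.mpr hu
  set pos := (n0 + 1) * u.length with hpos
  have hn0pos : n0 < pos := by
    have h2 : n0 + 1 ≤ (n0 + 1) * u.length := by
      calc n0 + 1 = (n0 + 1) * 1 := (Nat.mul_one _).symm
        _ ≤ (n0 + 1) * u.length := Nat.mul_le_mul_left _ hlen
    omega
  set r' := (M.start r).run w pos with hr'
  obtain ⟨n1, hn1, hn1r⟩ := hf (pos + 1)
  have rra : M.Reach f r' := by
    have := (reach_start M r).mp (reach_of_run (M.start r) w hn0pos)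
    rwa [hn0] at this
  have rrb : M.Reach r' f := by
    have := (reach_start M r).mp (reach_of_run (M.start r) w (show pos < n1 by omega))
    rwa [hn1r] at this
  have hr'F : r' ∈ M.F := hweak f hfF r' rra rrb
  have hreach : M.Reach r r' := by
    have h0 : (M.start r).run w 0 = r := rfl
    have := (reach_start M r).mp (reach_of_run (M.start r) w (show 0 < pos by omega))
    rwa [h0] at this
  have hLr' : (M.start r').Lang = (M.start q).Lang := by
    have e1 : r' = M.deltaStar r (seg w 0 pos) := by
      rw [hr', run_seg (M.start r) w (Nat.zero_le pos), deltaStar_start]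
      rfl
    have e2 : M.deltaStar q (seg w 0 pos) = q := by
      have := run_per_cycle M q u hu hcyc (n0 + 1)
      rw [run_seg (M.start q) w (Nat.zero_le pos), deltaStar_start] at this
      exact this
    rw [e1, ← e2]
    · exact congr_deltaStar M hL _
  exact ⟨r', hr'F, hLr', hreach, reach_trans M rrb rra⟩

lemma step_to_nF (M : DBA A Q) [Finite Q] (hweak : M.Weak) {q r : Q} (hqF : q ∉ M.F)
    (hqc : M.Reach q q) (hL : (M.start r).Lang = (M.start q).Lang) :
    ∃ r', r' ∉ M.F ∧ (M.start r').Lang = (M.start q).Lang ∧ M.Reach r r' ∧ M.Reach r' r' := by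
  obtain ⟨u, hu, hcyc⟩ := hqc
  set w := per u hu with hw
  have hlen : 1 ≤ u.length := List.length_pos_iff.mpr hu
  have hnq : ¬ (M.start q).Accepts w := not_accepts_per M hweak hqF hu hcyc
  have hnr : ¬ (M.start r).Accepts w := fun hacc => hnq ((Set.ext_iff.mp hL w).mp hacc)
  set J : Q → Q := fun s => M.deltaStar s u with hJ
  obtain ⟨k, l, hkl, hgkl⟩ := Finite.exists_ne_map_eq_of_infinite (fun k : ℕ => J^[k + 1] r)
  -- wlog k < l
  have key : ∀ k l : ℕ, k < l → J^[k + 1] r = J^[l + 1] r →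
      ∃ r', r' ∉ M.F ∧ (M.start r').Lang = (M.start q).Lang ∧ M.Reach r r' ∧ M.Reach r' r' := by
    intro k l hkl hgkl
    set r' := J^[k + 1] r with hr'
    have hLr' : (M.start r').Lang = (M.start q).Lang := by
      have hq2 : (M.start (M.deltaStar q u)).Lang = (M.start q).Lang := by rw [hcyc]
      exact iterate_lang M hq2 hL (k + 1)
    have hcyc' : J^[l - k] r' = r' := by
      rw [hr', ← Function.iterate_add_apply]
      have e : l - k + (k + 1) = l + 1 := by omega
      rw [e]
      exact hgkl.symm
    have hreach1 : M.Reach r r' := reach_iterate M hu r (k + 1) (by omega)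
    have hreach2 : M.Reach r' r' := by
      have := reach_iterate M hu r' (l - k) (by omega)
      rwa [hcyc'] at this
    refine ⟨r', ?_, hLr', hreach1, hreach2⟩
    intro hr'F
    apply hnr
    refine ⟨r', hr'F, fun N => ?_⟩
    refine ⟨(k + 1 + N * (l - k)) * u.length, ?_, ?_⟩
    · have h1 : 1 ≤ l - k := by omega
      have h4 : N ≤ N * ((l - k) * u.length) := by
        calc N = N * 1 := (Nat.mul_one N).symm
          _ ≤ N * ((l - k) * u.length) := Nat.mul_le_mul_left N (by
              calc 1 = 1 * 1 := rfl
                _ ≤ (l - k) * u.length := Nat.mul_le_mul h1 hlen)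
      calc N ≤ N * ((l - k) * u.length) := h4
        _ = (N * (l - k)) * u.length := by ring
        _ ≤ (k + 1 + N * (l - k)) * u.length := Nat.mul_le_mul_right _ (by omega)
    · rw [run_per_mul]
      have : ∀ j : ℕ, J^[k + 1 + j * (l - k)] r = r' := by
        intro j
        induction j with
        | zero => simp [hr']
        | succ j ih =>
          have e : k + 1 + (j + 1) * (l - k) = (l - k) + (k + 1 + j * (l - k)) := by ring
          rw [e, Function.iterate_add_apply, ih, hcyc']
      exact this N
  rcases hkl.lt_or_gt with h | h
  · exact key k l h hgkl
  · exact key l k h hgkl.symm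

lemma claimB (M : DBA A Q) [Finite Q] (hweak : M.Weak) {q r : Q} (hqF : q ∈ M.F)
    (hqc : M.Reach q q) (hL : (M.start r).Lang = (M.start q).Lang) (hrc : M.Reach r r) :
    r ∈ M.F := by
  by_contra hrF
  have step : ∀ s, (M.start s).Lang = (M.start q).Lang → M.Reach s s →
      ∃ s', (s ∈ M.F ↔ s' ∉ M.F) ∧ (M.start s').Lang = (M.start q).Lang ∧
        M.Reach s s' ∧ M.Reach s' s' := by
    intro t ht htc
    by_cases htF : t ∈ M.F
    · obtain ⟨s', h1, h2, h3, h4⟩ := step_to_nF M hweak hrF hrc (ht.trans hL.symm)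
      exact ⟨s', by simp [htF, h1], h2.trans hL, h3, h4⟩
    · obtain ⟨s', h1, h2, h3, h4⟩ := step_to_F M hweak hqF hqc ht
      exact ⟨s', by simp [htF, h1], h2, h3, h4⟩
  choose! g hg using step
  set c : ℕ → Q := fun n => g^[n] r with hc
  have hcsucc : ∀ n, c (n + 1) = g (c n) := fun n => Function.iterate_succ_apply' g n r
  have hinv : ∀ n, (M.start (c n)).Lang = (M.start q).Lang ∧ M.Reach (c n) (c n) := by
    intro n
    induction n with
    | zero => exact ⟨hL, hrc⟩
    | succ n ih =>
      obtain ⟨_, h2, _, h4⟩ := hg _ ih.1 ih.2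
      rw [hcsucc]
      exact ⟨h2, h4⟩
  have halt : ∀ n, (c n ∈ M.F ↔ c (n + 1) ∉ M.F) := by
    intro n
    rw [hcsucc]
    exact (hg _ (hinv n).1 (hinv n).2).1
  have hreach : ∀ n, M.Reach (c n) (c (n + 1)) := by
    intro n
    rw [hcsucc]
    exact (hg _ (hinv n).1 (hinv n).2).2.2.1
  have hreach2 : ∀ n m, m < n → M.Reach (c m) (c n) := by
    intro n
    induction n with
    | zero => intro m h; omega
    | succ n ih =>
      intro m h
      rcases Nat.lt_or_ge m n with h2 | h2
      · exact reach_trans M (ih m h2) (hreach n)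
      · have hmn : m = n := by omega
        rw [hmn]
        exact hreach n
  have key : ∀ i j, i < j → c i ≠ c j := by
    intro i j hij he
    rcases Nat.lt_or_ge (i + 1) j with h2 | h2
    · have ra : M.Reach (c (i + 1)) (c i) := by
        rw [he]; exact hreach2 j (i + 1) h2
      have rb : M.Reach (c i) (c (i + 1)) := hreach i
      by_cases hciF : c i ∈ M.F
      · exact ((halt i).mp hciF) (hweak _ hciF _ rb ra)
      · have h1 : c (i + 1) ∈ M.F := by have := halt i; tauto
        exact hciF (hweak _ h1 _ ra rb)
    · have hji : j = i + 1 := by omega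
      subst hji
      have := halt i
      rw [← he] at this
      tauto
  obtain ⟨i, j, hne, hij⟩ := Finite.exists_ne_map_eq_of_infinite c
  rcases hne.lt_or_gt with h | h
  · exact key i j h hij
  · exact key j i h hij.symm

end MWaux

/-- existence of a minimal quotient of a weak deterministic Büchi
automaton whose states are all accessible. -/
theorem stmt1 {A Q : Type} [Fintype A] [Fintype Q] (M : DBA A Q)
    (hweak : M.Weak) (hacc : ∀ q : Q, ∃ u : List A, M.deltaStar M.init u = q) :
    ∃ (Q' : Type) (_ : Fintype Q') (M' : DBA A Q') (μ : Q → Q'),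
      M'.Weak ∧ M'.Minimal ∧
      (∀ q' : Q', ∃ u : List A, M'.deltaStar M'.init u = q') ∧
      Function.Surjective μ ∧
      μ M.init = M'.init ∧
      (∀ q : Q, (M.start q).Lang = (M'.start (μ q)).Lang) ∧
      M'.Lang = M.Lang := by
  classical
  set s : Setoid Q := ⟨fun a b => (M.start a).Lang = (M.start b).Lang,
    ⟨fun _ => rfl, Eq.symm, Eq.trans⟩⟩ with hs
  set M' : DBA A (Quotient s) :=
    { delta := fun c a => Quotient.lift (fun p => Quotient.mk s (M.delta p a))
        (fun p r h => Quotient.sound (MWaux.congr_delta M h a)) c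
      init := Quotient.mk s M.init
      F := {c | ∃ p, p ∈ M.F ∧ Quotient.mk s p = c ∧ M.Reach p p} } with hM'
  have hstar : ∀ (p : Q) (u : List A),
      M'.deltaStar (Quotient.mk s p) u = Quotient.mk s (M.deltaStar p u) := by
    intro p u
    induction u generalizing p with
    | nil => rfl
    | cons a u ih =>
      show M'.deltaStar (M'.delta (Quotient.mk s p) a) u = _
      have e : M'.delta (Quotient.mk s p) a = Quotient.mk s (M.delta p a) := rfl
      rw [e]
      exact ih (M.delta p a)
  have hrun : ∀ (p : Q) (w : ℕ → A) (n : ℕ),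
      (M'.start (Quotient.mk s p)).run w n = Quotient.mk s ((M.start p).run w n) := by
    intro p w n
    induction n with
    | zero => rfl
    | succ n ih =>
      show (M'.start (Quotient.mk s p)).delta ((M'.start (Quotient.mk s p)).run w n) (w n) = _
      rw [ih]
      rfl
  have hlang : ∀ p : Q, (M.start p).Lang = (M'.start (Quotient.mk s p)).Lang := by
    intro p
    ext w
    constructor
    · rintro ⟨f, hfF, hf⟩
      have hff : M.Reach f f := by
        obtain ⟨n, _, hn⟩ := hf 0
        obtain ⟨m, hm, hmr⟩ := hf (n + 1)
        have := (MWaux.reach_start M p).mp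
          (MWaux.reach_of_run (M.start p) w (show n < m by omega))
        rwa [hn, hmr] at this
      refine ⟨Quotient.mk s f, ⟨f, hfF, rfl, hff⟩, fun N => ?_⟩
      obtain ⟨n, hn, he⟩ := hf N
      exact ⟨n, hn, by rw [hrun, he]⟩
    · rintro ⟨cF, ⟨p0, hp0F, hp0eq, hp0c⟩, hcf⟩
      have hex : ∃ t : Q, Quotient.mk s t = cF ∧
          ∀ N, ∃ n, N ≤ n ∧ (M.start p).run w n = t := by
        by_contra hno
        push_neg at hno
        choose! B hB using hno
        obtain ⟨n, hn, he⟩ := hcf (Finset.univ.sup B)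
        have he2 : Quotient.mk s ((M.start p).run w n) = cF := by
          rw [← hrun]; exact he
        exact hB _ he2 n (le_trans (Finset.le_sup (Finset.mem_univ _)) hn) rfl
      obtain ⟨t, hteq, htinf⟩ := hex
      have htt : M.Reach t t := by
        obtain ⟨n, _, hn⟩ := htinf 0
        obtain ⟨m, hm, hmr⟩ := htinf (n + 1)
        have := (MWaux.reach_start M p).mp
          (MWaux.reach_of_run (M.start p) w (show n < m by omega))
        rwa [hn, hmr] at this
      have htL : (M.start t).Lang = (M.start p0).Lang :=
        Quotient.exact (hteq.trans hp0eq.symm)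
      have htF : t ∈ M.F := MWaux.claimB M hweak hp0F hp0c htL htt
      exact ⟨t, htF, htinf⟩
  have hweak' : M'.Weak := by
    rintro c ⟨p, hpF, hpeq, hpc⟩ c' ⟨u, hu, hdu⟩ ⟨v, hv, hdv⟩
    subst hpeq
    rw [hstar] at hdu
    subst hdu
    rw [hstar] at hdv
    have hvp : (M.start (M.deltaStar (M.deltaStar p u) v)).Lang = (M.start p).Lang :=
      Quotient.exact hdv
    have hsw : (M.start (M.deltaStar p (u ++ v))).Lang = (M.start p).Lang := by
      rw [MWaux.deltaStar_append]; exact hvp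
    set J : Q → Q := fun t => M.deltaStar t (u ++ v) with hJ
    have hswne : u ++ v ≠ [] := by simp [hu]
    have hLall : ∀ m, (M.start (J^[m] p)).Lang = (M.start p).Lang :=
      fun m => MWaux.iterate_lang M hsw rfl m
    have key : ∀ k l : ℕ, k < l → J^[k + 1] p = J^[l + 1] p →
        (Quotient.mk s (M.deltaStar p u)) ∈ M'.F := by
      intro k l hkl hgkl
      set r0 := J^[k + 1] p with hr0
      have hr0cyc : J^[l - k] r0 = r0 := by
        rw [hr0, ← Function.iterate_add_apply]
        have e : l - k + (k + 1) = l + 1 := by omega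
        rw [e]
        exact hgkl.symm
      have hr0r : M.Reach r0 r0 := by
        have := MWaux.reach_iterate M hswne r0 (l - k) (by omega)
        rwa [hr0cyc] at this
      have hr0L : (M.start r0).Lang = (M.start p).Lang := hLall (k + 1)
      have hr0F : r0 ∈ M.F := MWaux.claimB M hweak hpF hpc hr0L hr0r
      set mid := M.deltaStar r0 u with hmid
      have hmidL : (M.start mid).Lang = (M.start (M.deltaStar p u)).Lang :=
        MWaux.congr_deltaStar M hr0L u
      have hra : M.Reach r0 mid := ⟨u, hu, rfl⟩
      have e1 : M.deltaStar mid v = J r0 := by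
        rw [hmid, ← MWaux.deltaStar_append]
      have hrb : M.Reach mid r0 := by
        rcases Nat.lt_or_ge (l - k) 2 with h2 | h2
        · have e2 : l - k = 1 := by omega
          refine ⟨v, hv, ?_⟩
          rw [e1]
          have : J r0 = J^[1] r0 := rfl
          rw [this, ← e2, hr0cyc]
        · have hstep : M.Reach mid (J r0) := ⟨v, hv, e1⟩
          have hit : M.Reach (J r0) (J^[l - k - 1] (J r0)) :=
            MWaux.reach_iterate M hswne (J r0) (l - k - 1) (by omega)
          have e3 : J^[l - k - 1] (J r0) = r0 := by
            have : J r0 = J^[1] r0 := rfl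
            rw [this, ← Function.iterate_add_apply]
            have e4 : l - k - 1 + 1 = l - k := by omega
            rw [e4, hr0cyc]
          rw [e3] at hit
          exact MWaux.reach_trans M hstep hit
      have hmidF : mid ∈ M.F := hweak r0 hr0F mid hra hrb
      exact ⟨mid, hmidF, Quotient.sound hmidL, MWaux.reach_trans M hrb hra⟩
    obtain ⟨k, l, hkl, hgkl⟩ :=
      Finite.exists_ne_map_eq_of_infinite (fun k : ℕ => J^[k + 1] p)
    rcases hkl.lt_or_gt with h | h
    · exact key k l h hgkl
    · exact key l k h hgkl.symm
  have hmin : M'.Minimal := by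
    intro c c' hne heq
    apply hne
    obtain ⟨a, rfl⟩ := Quotient.exists_rep c
    obtain ⟨b, rfl⟩ := Quotient.exists_rep c'
    apply Quotient.sound
    show (M.start a).Lang = (M.start b).Lang
    rw [hlang a, hlang b]
    exact heq
  have haccQ : ∀ c : Quotient s, ∃ u : List A, M'.deltaStar M'.init u = c := by
    intro c
    obtain ⟨p, rfl⟩ := Quotient.exists_rep c
    obtain ⟨u, hu⟩ := hacc p
    refine ⟨u, ?_⟩
    have e : M'.init = Quotient.mk s M.init := rfl
    rw [e, hstar, hu]
  refine ⟨Quotient s, @Quotient.fintype Q _ s (fun a b => Classical.dec _),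
    M', fun p => Quotient.mk s p, hweak', hmin, haccQ, Quotient.exists_rep, rfl, hlang, ?_⟩
  exact (hlang M.init).symm
end

section
/- Let 𝒜 be a weak deterministic Büchi automaton over the alphabet Σ ∪ {⋆}, and let w = u⋆w' be an infinite word with u ∈ Σ^*, |u| a multiple of d, and w' ∈ Σ^ω. Then 𝒜 accepts w if and only if par(𝒜) accepts par(w). -/
namespace DBA

lemma deltaStar_append {A Q : Type} (M : DBA A Q) (q : Q) (u v : List A) :
    M.deltaStar q (u ++ v) = M.deltaStar (M.deltaStar q u) v := by
  induction u generalizing q with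
  | nil => rfl
  | cons a u ih => simp [deltaStar, ih]

lemma run_add {A Q : Type} (M : DBA A Q) (w : ℕ → A) (l : ℕ) : ∀ m,
    M.run w (m + l) = M.deltaStar (M.run w m) (List.ofFn fun i : Fin l => w (m + (i : ℕ))) := by
  induction l with
  | zero => intro m; rfl
  | succ l ih =>
    intro m
    have h1 : m + (l + 1) = (m + 1) + l := by omega
    rw [h1, ih (m + 1), List.ofFn_succ]
    have h2 : (List.ofFn fun i : Fin l => w (m + ((i.succ : Fin (l+1)) : ℕ)))
        = List.ofFn fun i : Fin l => w (m + 1 + (i : ℕ)) := by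
      congr 1; funext i; congr 1; simp [Fin.val_succ]; omega
    simp only [deltaStar, h2]
    rfl

lemma eventually_mem_F {A Q : Type} (M : DBA A Q) (hweak : M.Weak) (w : ℕ → A)
    (h : M.Accepts w) : ∃ N, ∀ n, N ≤ n → M.run w n ∈ M.F := by
  obtain ⟨q, hq, hinf⟩ := h
  obtain ⟨N, -, hN⟩ := hinf 0
  refine ⟨N, fun n hn => ?_⟩
  rcases eq_or_lt_of_le hn with h | h
  · rw [← h]; rw [hN]; exact hq
  · obtain ⟨m, hm, hm2⟩ := hinf (n + 1)
    have r1 : M.Reach q (M.run w n) := by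
      refine ⟨List.ofFn fun i : Fin (n - N) => w (N + (i : ℕ)), ?_, ?_⟩
      · intro hc
        have := congrArg List.length hc
        simp at this; omega
      · rw [← hN, ← M.run_add w (n - N) N]
        congr 1; omega
    have r2 : M.Reach (M.run w n) q := by
      refine ⟨List.ofFn fun i : Fin (m - n) => w (n + (i : ℕ)), ?_, ?_⟩
      · intro hc
        have := congrArg List.length hc
        simp at this; omega
      · rw [← M.run_add w (m - n) n]
        rw [show n + (m - n) = m from by omega, hm2]
    exact hweak q hq _ r1 r2

end DBA

lemma exists_freq {Q : Type} [Fintype Q] (g : ℕ → Q) :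
    ∃ q : Q, ∀ N, ∃ n, N ≤ n ∧ g n = q := by
  obtain ⟨q, hq⟩ := Finite.exists_infinite_fiber g
  refine ⟨q, fun N => ?_⟩
  have hinf : (g ⁻¹' {q}).Infinite := Set.infinite_coe_iff.mp hq
  obtain ⟨n, hn, hn2⟩ := hinf.exists_gt N
  exact ⟨n, le_of_lt hn2, hn⟩

lemma par_run_eq {Q : Type} {b d : ℕ} (M : DBA (Option (Fin b)) Q)
    (v : ℕ → Option (Fin d → Fin b)) (w : ℕ → Option (Fin b)) (p : ℕ → ℕ)
    (hp0 : p 0 = 0)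
    (hstep : ∀ n, (v n = none ∧ p (n+1) = p n + 1 ∧ w (p n) = none) ∨
      (∃ t, v n = some t ∧ p (n+1) = p n + d ∧
        ∀ i : Fin d, w (p n + (i : ℕ)) = some (t i))) :
    ∀ n, (parDBA d M).run v n = M.run w (p n) := by
  intro n
  induction n with
  | zero => rw [hp0]; rfl
  | succ n ih =>
    show (parDBA d M).delta ((parDBA d M).run v n) (v n) = M.run w (p (n+1))
    rcases hstep n with ⟨h1, h2, h3⟩ | ⟨t, h1, h2, h3⟩
    · rw [h1, ih, h2]
      show M.delta (M.run w (p n)) none = M.run w (p n + 1)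
      rw [← h3]; rfl
    · rw [h1, ih, h2, M.run_add w d (p n)]
      show M.deltaStar (M.run w (p n)) (List.ofFn fun i => some (t i)) = _
      exact congrArg (M.deltaStar _) (congrArg List.ofFn (funext fun i => (h3 i).symm))

lemma accepts_par_iff {Q : Type} [Fintype Q] {b d : ℕ} (hd : 0 < d)
    (M : DBA (Option (Fin b)) Q) (hweak : M.Weak)
    (v : ℕ → Option (Fin d → Fin b)) (w : ℕ → Option (Fin b)) (p : ℕ → ℕ)
    (hp0 : p 0 = 0)
    (hstep : ∀ n, (v n = none ∧ p (n+1) = p n + 1 ∧ w (p n) = none) ∨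
      (∃ t, v n = some t ∧ p (n+1) = p n + d ∧
        ∀ i : Fin d, w (p n + (i : ℕ)) = some (t i))) :
    M.Accepts w ↔ (parDBA d M).Accepts v := by
  have hrun := par_run_eq M v w p hp0 hstep
  have hpn : ∀ n, n ≤ p n := by
    intro n
    induction n with
    | zero => omega
    | succ n ih => rcases hstep n with ⟨_, h2, _⟩ | ⟨_, _, h2, _⟩ <;> omega
  constructor
  · intro h
    obtain ⟨N, hN⟩ := M.eventually_mem_F hweak w h
    obtain ⟨q, hq⟩ := exists_freq ((parDBA d M).run v)
    refine ⟨q, ?_, hq⟩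
    obtain ⟨n, hn, hn2⟩ := hq N
    show q ∈ M.F
    rw [← hn2, hrun n]
    exact hN _ (le_trans hn (hpn n))
  · rintro ⟨q, hq, hinf⟩
    refine ⟨q, hq, fun N => ?_⟩
    obtain ⟨n, hn, hn2⟩ := hinf N
    exact ⟨p n, le_trans hn (hpn n), by rw [← hrun n, hn2]⟩

/-- `𝒜` accepts `u⋆w'` (with `|u|` a multiple of `d`) iff `par(𝒜)`
accepts `par(u⋆w')`. -/
theorem stmt2 {Q : Type} [Fintype Q] {b d : ℕ} (hb : 2 ≤ b) (hd : 0 < d)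
    (M : DBA (Option (Fin b)) Q) (hweak : M.Weak)
    (u : List (Fin b)) (k : ℕ) (hlen : u.length = d * k) (w' : ℕ → Fin b) :
    M.Accepts (cat (u.map some ++ [none]) (fun n => some (w' n))) ↔
      (parDBA d M).Accepts
        (encWord
          (List.ofFn fun j : Fin k => fun i : Fin d =>
            u.get ⟨d * (j : ℕ) + (i : ℕ), by
              have hj := j.isLt; have hi := i.isLt
              calc d * (j : ℕ) + (i : ℕ) < d * (j : ℕ) + d := by omega
                _ = d * ((j : ℕ) + 1) := by ring
                _ ≤ d * k := Nat.mul_le_mul_left d hj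
                _ = u.length := hlen.symm⟩)
          (fun n => fun i : Fin d => w' (d * n + (i : ℕ)))) := by
  refine (accepts_par_iff hd M hweak _ _
    (fun n => if n ≤ k then d * n else d * k + 1 + d * (n - (k + 1))) (by simp) ?_).symm.symm
  intro n
  beta_reduce
  rcases lt_trichotomy n k with hnk | hnk | hnk
  · right
    have hdn : d * n + d ≤ d * k := by
      have := Nat.mul_le_mul_left d hnk
      calc d * n + d = d * (n + 1) := by ring
        _ ≤ d * k := Nat.mul_le_mul_left d hnk
    refine ⟨fun i : Fin d => u.get ⟨d * n + (i : ℕ), by have := i.isLt; omega⟩, ?_, ?_, ?_⟩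
    · simp only [encWord, cat]
      have hl : n < (((List.ofFn fun j : Fin k => fun i : Fin d =>
          u.get ⟨d * (j : ℕ) + (i : ℕ), by
            have hj := j.isLt; have hi := i.isLt
            calc d * (j : ℕ) + (i : ℕ) < d * (j : ℕ) + d := by omega
              _ = d * ((j : ℕ) + 1) := by ring
              _ ≤ d * k := Nat.mul_le_mul_left d hj
              _ = u.length := hlen.symm⟩).map some) ++ [none]).length := by
        simp; omega
      rw [dif_pos hl]
      rw [List.get_eq_getElem, List.getElem_append_left (by simp; omega),
        List.getElem_map, List.getElem_ofFn]
    · rw [if_pos (by omega : n + 1 ≤ k), if_pos (le_of_lt hnk), Nat.mul_succ]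
    · intro i
      have hi := i.isLt
      rw [if_pos (le_of_lt hnk)]
      simp only [cat]
      have hl : d * n + (i : ℕ) < ((u.map some) ++ [none]).length := by
        simp [hlen]; omega
      rw [dif_pos hl, List.get_eq_getElem,
        List.getElem_append_left (by simp [hlen]; omega), List.getElem_map]
      rfl
  · left
    subst hnk
    refine ⟨?_, ?_, ?_⟩
    · simp only [encWord, cat]
      have hl : n < (((List.ofFn fun j : Fin n => fun i : Fin d =>
          u.get ⟨d * (j : ℕ) + (i : ℕ), by
            have hj := j.isLt; have hi := i.isLt
            calc d * (j : ℕ) + (i : ℕ) < d * (j : ℕ) + d := by omega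
              _ = d * ((j : ℕ) + 1) := by ring
              _ ≤ d * n := Nat.mul_le_mul_left d hj
              _ = u.length := hlen.symm⟩).map some) ++ [none]).length := by
        simp
      rw [dif_pos hl, List.get_eq_getElem, List.getElem_append_right (by simp)]
      simp
    · rw [if_pos (le_refl n), if_neg (by omega)]
      simp
    · rw [if_pos (le_refl n)]
      simp only [cat]
      have hl : d * n < ((u.map some) ++ [none]).length := by simp [hlen]
      rw [dif_pos hl, List.get_eq_getElem, List.getElem_append_right (by simp [hlen])]
      simp [hlen]
  · right
    set m := n - (k + 1) with hm
    have hn1 : ¬ n ≤ k := by omega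
    have hn2 : ¬ n + 1 ≤ k := by omega
    refine ⟨fun i : Fin d => w' (d * m + (i : ℕ)), ?_, ?_, ?_⟩
    · simp only [encWord, cat]
      rw [dif_neg (by simp; omega)]
      simp
      rfl
    · rw [if_neg hn1, if_neg hn2]
      have : d * (n + 1 - (k + 1)) = d * m + d := by
        rw [show n + 1 - (k + 1) = m + 1 from by omega, Nat.mul_succ]
      omega
    · intro i
      rw [if_neg hn1]
      simp only [cat]
      have hlen2 : ((u.map some) ++ [none]).length = d * k + 1 := by simp [hlen]
      have hge : ¬ (d * k + 1 + d * m + (i : ℕ) < ((u.map some) ++ [none]).length) := by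
        rw [hlen2]; omega
      rw [dif_neg hge, hlen2]
      congr 2
      omega
end

section
/- Let 𝒜 be a weak deterministic Büchi automaton over the alphabet Σ ∪ {⋆}, and let 𝐯 be any infinite word over Σ^d ∪ {⋆}. Then par(𝒜) accepts 𝐯 if and only if 𝒜 accepts seq(𝐯). -/
namespace Stmt3Aux
open DBA

variable {A Q : Type} {b d : ℕ}

lemma deltaStar_append (M : DBA A Q) (q : Q) (u u' : List A) :
    M.deltaStar q (u ++ u') = M.deltaStar (M.deltaStar q u) u' := by
  induction u generalizing q with
  | nil => rfl
  | cons a u ih => simp [DBA.deltaStar, ih]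

lemma run_add (M : DBA A Q) (w : ℕ → A) (m k : ℕ) :
    M.run w (m + k) = M.deltaStar (M.run w m) (List.ofFn fun i : Fin k => w (m + i)) := by
  induction k with
  | zero => rfl
  | succ k ih =>
    rw [List.ofFn_succ']
    simp only [List.concat_eq_append, deltaStar_append, DBA.deltaStar]
    show M.delta (M.run w (m + k)) (w (m + k)) = _
    rw [ih]
    simp

/-- Sum of block lengths of the first `n` letters. -/
def Plen (v : ℕ → Option (Fin d → Fin b)) : ℕ → ℕ
  | 0 => 0
  | n + 1 => Plen v n + (parBlock (v n)).length

lemma parBlock_len_pos (hd : 0 < d) (x : Option (Fin d → Fin b)) :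
    0 < (parBlock x).length := by
  cases x <;> simp [parBlock] <;> omega

lemma Plen_le_self {v : ℕ → Option (Fin d → Fin b)} (hd : 0 < d) (n : ℕ) :
    n ≤ Plen v n := by
  induction n with
  | zero => exact le_refl _
  | succ n ih =>
    have := parBlock_len_pos (b := b) hd (v n)
    simp only [Plen]; omega

lemma Plen_mono {v : ℕ → Option (Fin d → Fin b)} (hd : 0 < d) {m n : ℕ} (h : m < n) :
    Plen v m < Plen v n := by
  induction n with
  | zero => omega
  | succ n ih =>
    have := parBlock_len_pos (b := b) hd (v n)
    have h2 : Plen v m ≤ Plen v n := by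
      rcases Nat.lt_or_ge m n with h' | h'
      · exact le_of_lt (ih h')
      · have : m = n := by omega
        subst this; exact le_refl _
    simp only [Plen]; omega

lemma flatAux_eq (hd : 0 < d) (v : ℕ → Option (Fin d → Fin b)) :
    ∀ n j, j < (parBlock (v n)).length →
      flatAux parBlock v (Plen v n + j) = (n, j) := by
  intro n
  induction n with
  | zero =>
    intro j
    induction j with
    | zero => intro _; rfl
    | succ j ihj =>
      intro hj
      have h0 := ihj (Nat.lt_of_succ_lt hj)
      show flatAux parBlock v (Plen v 0 + j + 1) = (0, j + 1)
      simp only [flatAux, h0]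
      simp [hj]
  | succ n ihn =>
    have hpos := parBlock_len_pos (b := b) hd (v n)
    have hstart : flatAux parBlock v (Plen v (n + 1)) = (n + 1, 0) := by
      have h1 : Plen v (n + 1) = Plen v n + ((parBlock (v n)).length - 1) + 1 := by
        simp only [Plen]; omega
      rw [h1]
      have h2 := ihn ((parBlock (v n)).length - 1) (by omega)
      simp only [flatAux, h2]
      have : ¬ ((parBlock (v n)).length - 1 + 1 < (parBlock (v n)).length) := by omega
      simp [this]
    intro j
    induction j with
    | zero => intro _; simpa using hstart
    | succ j ihj =>
      intro hj
      have h0 := ihj (Nat.lt_of_succ_lt hj)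
      show flatAux parBlock v (Plen v (n + 1) + j + 1) = (n + 1, j + 1)
      simp only [flatAux, h0]
      simp [hj]

lemma seqWord_eq (hd : 0 < d) (v : ℕ → Option (Fin d → Fin b))
    (n j : ℕ) (hj : j < (parBlock (v n)).length) :
    seqWord v (Plen v n + j) = (parBlock (v n)).getD j default := by
  show (parBlock (v ((flatAux parBlock v (Plen v n + j)).1))).getD
      (flatAux parBlock v (Plen v n + j)).2 default = _
  rw [flatAux_eq hd v n j hj]

lemma seqWord_none (hd : 0 < d) {v : ℕ → Option (Fin d → Fin b)} {n : ℕ}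
    (hv : v n = none) : seqWord v (Plen v n) = none := by
  have := seqWord_eq hd v n 0 (parBlock_len_pos hd (v n))
  simpa [hv, parBlock] using this

lemma seqWord_some (hd : 0 < d) {v : ℕ → Option (Fin d → Fin b)} {n : ℕ}
    {t : Fin d → Fin b} (hv : v n = some t) (i : Fin d) :
    seqWord v (Plen v n + i) = some (t i) := by
  have hi : (i : ℕ) < (parBlock (v n)).length := by
    simp [hv, parBlock, i.isLt]
  have := seqWord_eq hd v n i hi
  rw [this, hv]
  show (List.ofFn fun j => some (t j)).getD (i : ℕ) default = some (t i)
  rw [List.getD_eq_getElem _ _ (by simp [i.isLt])]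
  simp

lemma run_par (hd : 0 < d) (M : DBA (Option (Fin b)) Q)
    (v : ℕ → Option (Fin d → Fin b)) (n : ℕ) :
    (parDBA d M).run v n = M.run (seqWord v) (Plen v n) := by
  induction n with
  | zero => rfl
  | succ n ih =>
    show (parDBA d M).delta ((parDBA d M).run v n) (v n) = M.run (seqWord v) (Plen v (n + 1))
    rw [ih]
    have hP : Plen v (n + 1) = Plen v n + (parBlock (v n)).length := rfl
    cases hv : v n with
    | none =>
      rw [hP, hv]
      show M.delta (M.run (seqWord v) (Plen v n)) none
        = M.run (seqWord v) (Plen v n + (parBlock (none : Option (Fin d → Fin b))).length)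
      have : (parBlock (none : Option (Fin d → Fin b))).length = 1 := rfl
      rw [this]
      show _ = M.delta (M.run (seqWord v) (Plen v n)) (seqWord v (Plen v n))
      rw [seqWord_none hd hv]
    | some t =>
      rw [hP, hv]
      show M.deltaStar (M.run (seqWord v) (Plen v n)) (List.ofFn fun i => some (t i))
        = M.run (seqWord v) (Plen v n + (parBlock (some t)).length)
      have hlen : (parBlock (some t) : List (Option (Fin b))).length = d := by
        simp [parBlock]
      rw [hlen, run_add]
      congr 1
      exact congrArg List.ofFn (funext fun i => (seqWord_some hd hv i).symm)

lemma exists_block (hd : 0 < d) (v : ℕ → Option (Fin d → Fin b)) (m : ℕ) :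
    ∃ n, Plen v n ≤ m ∧ m < Plen v (n + 1) := by
  induction m with
  | zero => exact ⟨0, le_refl _, Plen_mono hd (Nat.zero_lt_one)⟩
  | succ m ih =>
    obtain ⟨n, h1, h2⟩ := ih
    rcases Nat.lt_or_ge (m + 1) (Plen v (n + 1)) with h | h
    · exact ⟨n, by omega, h⟩
    · refine ⟨n + 1, h, ?_⟩
      have : m + 1 = Plen v (n + 1) := by omega
      rw [this]
      exact Plen_mono hd (by omega)

lemma ofFn_ne_nil {α : Type*} {k : ℕ} (hk : 0 < k) (f : Fin k → α) :
    List.ofFn f ≠ [] := by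
  intro h
  have := congrArg List.length h
  simp at this
  omega

end Stmt3Aux

open Stmt3Aux in

/-- `par(𝒜)` accepts `𝐯` iff `𝒜` accepts `seq(𝐯)`. -/
theorem stmt3 {Q : Type} [Fintype Q] {b d : ℕ} (hb : 2 ≤ b) (hd : 0 < d)
    (M : DBA (Option (Fin b)) Q) (hweak : M.Weak)
    (v : ℕ → Option (Fin d → Fin b)) :
    (parDBA d M).Accepts v ↔ M.Accepts (seqWord v) := by
  constructor
  · rintro ⟨q, hq, hrec⟩
    refine ⟨q, hq, fun N => ?_⟩
    obtain ⟨n, hn, hrun⟩ := hrec N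
    exact ⟨Plen v n, le_trans hn (Plen_le_self hd n),
      by rw [← run_par hd M v n]; exact hrun⟩
  · rintro ⟨q, hq, hrec⟩
    have h1 : ∀ N : ℕ, ∃ m n, Plen v N ≤ m ∧ M.run (seqWord v) m = q ∧
        Plen v n ≤ m ∧ m < Plen v (n + 1) := by
      intro N
      obtain ⟨m, hm1, hm2⟩ := hrec (Plen v N)
      obtain ⟨n, hn1, hn2⟩ := exists_block hd v m
      exact ⟨m, n, hm1, hm2, hn1, hn2⟩
    choose mf nf hA hB hC hD using h1
    have hNnf : ∀ N, N ≤ nf N := by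
      intro N
      by_contra hcon
      push_neg at hcon
      have h2 : Plen v (nf N + 1) ≤ Plen v N := by
        rcases Nat.lt_or_ge (nf N + 1) N with h | h
        · exact le_of_lt (Plen_mono hd h)
        · have h3 : nf N + 1 = N := by omega
          rw [h3]
      have := hA N
      have := hD N
      omega
    obtain ⟨p, hp⟩ := Finite.exists_infinite_fiber
      (fun N => M.run (seqWord v) (Plen v (nf N)))
    have hset : ((fun N => M.run (seqWord v) (Plen v (nf N))) ⁻¹' {p}).Infinite :=
      Set.infinite_coe_iff.mp hp
    have hpar : ∀ N₀ : ℕ, ∃ n, N₀ ≤ n ∧ (parDBA d M).run v n = p := by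
      intro N₀
      obtain ⟨N, hN, hNgt⟩ := hset.exists_gt N₀
      simp only [Set.mem_preimage, Set.mem_singleton_iff] at hN
      refine ⟨nf N, le_trans (le_of_lt hNgt) (hNnf N), ?_⟩
      rw [run_par hd M v]
      exact hN
    have hpF : p ∈ M.F := by
      by_cases hpq : p = q
      · rw [hpq]; exact hq
      · obtain ⟨N, hN, -⟩ := hset.exists_gt 0
        simp only [Set.mem_preimage, Set.mem_singleton_iff] at hN
        have hlt : Plen v (nf N) < mf N := by
          rcases Nat.lt_or_ge (Plen v (nf N)) (mf N) with h | h
          · exact h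
          · exfalso
            apply hpq
            have heq : Plen v (nf N) = mf N := le_antisymm (hC N) h
            rw [← hN, heq, hB N]
        have hreach1 : M.Reach p q := by
          refine ⟨List.ofFn fun i : Fin (mf N - Plen v (nf N)) =>
              seqWord v (Plen v (nf N) + i), ofFn_ne_nil (by omega) _, ?_⟩
          rw [← hN, ← run_add,
            show Plen v (nf N) + (mf N - Plen v (nf N)) = mf N by omega]
          exact hB N
        obtain ⟨N', hN', hgt⟩ := hset.exists_gt (mf N)
        simp only [Set.mem_preimage, Set.mem_singleton_iff] at hN'
        have hlt2 : mf N < Plen v (nf N') := by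
          have h4 := hNnf N'
          have h5 := Plen_le_self (v := v) hd (nf N')
          omega
        have hreach2 : M.Reach q p := by
          refine ⟨List.ofFn fun i : Fin (Plen v (nf N') - mf N) =>
              seqWord v (mf N + i), ofFn_ne_nil (by omega) _, ?_⟩
          rw [← hB N, ← run_add,
            show mf N + (Plen v (nf N') - mf N) = Plen v (nf N') by omega]
          exact hN'
        exact hweak q hq p hreach2 hreach1
    exact ⟨p, hpF, hpar⟩
end

section
/- If 𝒜 is a weak deterministic Büchi automaton over the alphabet Σ ∪ {⋆}, then for every digit z ∈ Σ and every d ≥ 1, the deterministic Büchi automaton 𝒜^{seq z} is weak. -/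
lemma seq_bot {Q : Type} {b : ℕ} (M : DBA (Option (Fin b)) Q) (z : Fin b) (d : ℕ) (hd : 0 < d)
    (u : List (Option (Option (Fin b)))) :
    (seqDBA d hd M z).deltaStar none u = none := by
  induction u with
  | nil => rfl
  | cons a u ih => simpa [DBA.deltaStar, seqDBA] using ih

lemma seq_proj {Q : Type} {b : ℕ} (M : DBA (Option (Fin b)) Q) (z : Fin b) (d : ℕ) (hd : 0 < d) :
    ∀ (u : List (Option (Option (Fin b)))) (q : Q) (i : Fin d) (q' : Q) (i' : Fin d),
      (seqDBA d hd M z).deltaStar (some (q, i)) u = some (q', i') →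
      ∃ v : List (Option (Fin b)), v.length = u.length ∧ M.deltaStar q v = q' := by
  intro u
  induction u with
  | nil =>
      intro q i q' i' h
      simp [DBA.deltaStar] at h
      exact ⟨[], rfl, by simp [DBA.deltaStar, h.1]⟩
  | cons a u ih =>
      intro q i q' i' h
      match a with
      | none =>
          have h' : (seqDBA d hd M z).deltaStar (some (M.delta q none, i)) u = some (q', i') := h
          obtain ⟨v, hv, hv'⟩ := ih _ _ _ _ h'
          exact ⟨none :: v, by simp [hv], hv'⟩
      | some none =>
          by_cases hc : (i : ℕ) = d - 1
          · have h' : (seqDBA d hd M z).deltaStar (some (M.delta q (some z), ⟨0, hd⟩)) u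
                = some (q', i') := by
              simpa [DBA.deltaStar, seqDBA, hc] using h
            obtain ⟨v, hv, hv'⟩ := ih _ _ _ _ h'
            exact ⟨some z :: v, by simp [hv], hv'⟩
          · exfalso
            have h' : (seqDBA d hd M z).deltaStar none u = some (q', i') := by
              simpa [DBA.deltaStar, seqDBA, hc] using h
            rw [seq_bot] at h'
            cases h'
      | some (some x) =>
          by_cases hc : (i : ℕ) + 1 < d
          · have h' : (seqDBA d hd M z).deltaStar (some (M.delta q (some x), ⟨(i:ℕ)+1, hc⟩)) u
                = some (q', i') := by
              simpa [DBA.deltaStar, seqDBA, hc] using h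
            obtain ⟨v, hv, hv'⟩ := ih _ _ _ _ h'
            exact ⟨some x :: v, by simp [hv], hv'⟩
          · exfalso
            have h' : (seqDBA d hd M z).deltaStar none u = some (q', i') := by
              simpa [DBA.deltaStar, seqDBA, hc] using h
            rw [seq_bot] at h'
            cases h'

/-- if `𝒜` is weak then `𝒜^{seq z}` is weak. -/
theorem stmt5 {Q : Type} [Fintype Q] {b : ℕ} (hb : 2 ≤ b)
    (M : DBA (Option (Fin b)) Q) (hweak : M.Weak) (z : Fin b) (d : ℕ) (hd : 0 < d) :
    (seqDBA d hd M z).Weak := by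
  rintro s hs s' hr hr'
  obtain ⟨q, hq, i, rfl⟩ := hs
  match s' with
  | none =>
      exfalso
      obtain ⟨u, hu, hdel⟩ := hr'
      rw [seq_bot] at hdel
      cases hdel
  | some (q', i') =>
      obtain ⟨u, hu, hdel⟩ := hr
      obtain ⟨v, hv, hv'⟩ := seq_proj M z d hd u q i q' i' hdel
      obtain ⟨u2, hu2, hdel2⟩ := hr'
      obtain ⟨v2, hv2, hv2'⟩ := seq_proj M z d hd u2 q' i' q i hdel2
      have hvne : v ≠ [] := by
        intro h; apply hu
        have := hv; rw [h] at this; simpa using (List.length_eq_zero_iff.mp this.symm)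
      have hv2ne : v2 ≠ [] := by
        intro h; apply hu2
        have := hv2; rw [h] at this; simpa using (List.length_eq_zero_iff.mp this.symm)
      exact ⟨q', hweak q hq q' ⟨v, hvne, hv'⟩ ⟨v2, hv2ne, hv2'⟩, i', rfl⟩
end

section
/- Let 𝒜 be a deterministic Büchi automaton over the alphabet Σ ∪ {⋆}, let z ∈ Σ and d ≥ 1, and let w be an infinite word over Σ ∪ {⋆} such that every occurrence of ⋆ in w is preceded by a number of digits that is a multiple of d, and such that every digit of w whose digit-position (counting only non-⋆ letters) is congruent to d−1 modulo d equals z. Then 𝒜 accepts w if and only if 𝒜^{seq z} accepts the word obtained from w by replacing every digit whose digit-position is congruent to d−1 modulo d by □. -/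
/-- sequential analogue of Statement 6; `none` is `⋆`, `some none` is `□`. -/
theorem stmt8 {Q : Type} [Fintype Q] {b : ℕ} (hb : 2 ≤ b) (d : ℕ) (hd : 0 < d)
    (M : DBA (Option (Fin b)) Q) (z : Fin b)
    (w : ℕ → Option (Fin b))
    (hstar : ∀ n, w n = none → d ∣ digitCount w n)
    (hz : ∀ n a, w n = some a → digitCount w n % d = d - 1 → a = z) :
    M.Accepts w ↔
      (seqDBA d hd M z).Accepts (fun n =>
        match w n with
        | none => none
        | some a => if digitCount w n % d = d - 1 then some none else some (some a)) := by
  classical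
  set w' : ℕ → Option (Option (Fin b)) := fun n =>
    match w n with
    | none => none
    | some a => if digitCount w n % d = d - 1 then some none else some (some a)
    with hw'
  have key : ∀ n, (seqDBA d hd M z).run w' n
      = some (M.run w n, ⟨digitCount w n % d, Nat.mod_lt _ hd⟩) := by
    intro n
    induction n with
    | zero =>
      simp [DBA.run, seqDBA, digitCount]
    | succ n ih =>
      rw [DBA.run, DBA.run, ih]
      cases hwn : w n with
      | none =>
        have hw'n : w' n = none := by simp [hw', hwn]
        rw [hw'n]
        simp [seqDBA, digitCount, hwn]
      | some a =>
        have hc1 : digitCount w (n+1) = digitCount w n + 1 := by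
          simp [digitCount, hwn]
        by_cases hm : digitCount w n % d = d - 1
        · have haz : a = z := hz n a hwn hm
          have hw'n : w' n = some none := by simp [hw', hwn, hm]
          rw [hw'n]
          have hnext : digitCount w (n+1) % d = 0 := by
            rw [hc1, ← Nat.mod_add_mod, hm]
            have hdd : d - 1 + 1 = d := Nat.succ_pred_eq_of_pos hd
            rw [hdd, Nat.mod_self]
          simp [seqDBA, hm, hnext, hwn, haz]
        · have hlt : digitCount w n % d + 1 < d := by
            have := Nat.mod_lt (digitCount w n) hd
            omega
          have hw'n : w' n = some (some a) := by simp [hw', hwn, hm]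
          rw [hw'n]
          have hnext : digitCount w (n+1) % d = digitCount w n % d + 1 := by
            rw [hc1, ← Nat.mod_add_mod, Nat.mod_eq_of_lt hlt]
          simp [seqDBA, hlt, hnext, hwn]
  constructor
  · rintro ⟨q, hq, hrec⟩
    have hfreq : ∃ᶠ n in Filter.atTop, M.run w n = q :=
      Filter.frequently_atTop.2 fun N => (hrec N).imp fun n h => ⟨h.1, h.2⟩
    have hpig : ∃ i : Fin d, ∃ᶠ n in Filter.atTop,
        M.run w n = q ∧ (⟨digitCount w n % d, Nat.mod_lt _ hd⟩ : Fin d) = i := by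
      by_contra hcon
      push_neg at hcon
      replace hcon : ∀ i : Fin d, ∀ᶠ n in Filter.atTop,
          ¬(M.run w n = q ∧ (⟨digitCount w n % d, Nat.mod_lt _ hd⟩ : Fin d) = i) :=
        fun i => (hcon i).mono fun n h => by tauto
      have hall : ∀ᶠ n in Filter.atTop, ∀ i : Fin d,
          ¬(M.run w n = q ∧ (⟨digitCount w n % d, Nat.mod_lt _ hd⟩ : Fin d) = i) :=
        Filter.eventually_all.2 hcon
      obtain ⟨n, hn1, hn2⟩ := (hfreq.and_eventually hall).exists
      exact hn2 _ ⟨hn1, rfl⟩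
    obtain ⟨i, hi⟩ := hpig
    refine ⟨some (q, i), ⟨q, hq, i, rfl⟩, fun N => ?_⟩
    obtain ⟨n, hn, hrun, hfin⟩ := (Filter.frequently_atTop.1 hi) N
    exact ⟨n, hn, by rw [key, hrun, hfin]⟩
  · rintro ⟨s, ⟨q, hq, i, rfl⟩, hrec⟩
    refine ⟨q, hq, fun N => ?_⟩
    obtain ⟨n, hn, hrun⟩ := hrec N
    rw [key] at hrun
    exact ⟨n, hn, (Prod.mk.injEq .. ▸ Option.some.inj hrun).1⟩
end

section
/- Let 𝒜 be a minimal weak deterministic Büchi automaton over the alphabet Σ^d ∪ {⋆} such that L(𝒜) ⊆ (Σ^d)^*⋆(Σ^d)^ω and δ(q₀,(0,…,0)) = q₀. Then the following are equivalent: (1) L(𝒜) is saturated; (2) for all words 𝐮⋆𝐰 and 𝐮'⋆𝐰' in (Σ^d)^*⋆(Σ^d)^ω with |𝐮| = |𝐮'| that encode the same vector of reals, if 𝒜 accepts 𝐮⋆𝐰 then 𝒜 accepts 𝐮'⋆𝐰'; (3) for all words 𝐮⋆𝐰 and 𝐮'⋆𝐰' in (Σ^d)^*⋆(Σ^d)^ω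 with |𝐮| = |𝐮'| that encode the same vector of reals and differ in exactly one component (there is exactly one index f with (u_f, w_f) ≠ (u'_f, w'_f)), if 𝒜 accepts 𝐮⋆𝐰 then 𝒜 accepts 𝐮'⋆𝐰'. -/
namespace Stmt11Aux

variable {A Q : Type}

lemma run_succ (M : DBA A Q) (x : ℕ → A) (n : ℕ) :
    M.run x (n + 1) = M.delta (M.run x n) (x n) := rfl

lemma run_shift (M : DBA A Q) (x y : ℕ → A) (k : ℕ)
    (hx : ∀ n, x (k + n) = y n) (h0 : M.run x k = M.init) :
    ∀ n, M.run x (k + n) = M.run y n := by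
  intro n
  induction n with
  | zero => simpa [DBA.run] using h0
  | succ n ih =>
      have h : k + (n + 1) = (k + n) + 1 := by omega
      rw [h, run_succ, run_succ, ih, hx n]

lemma accepts_shift (M : DBA A Q) (x y : ℕ → A) (k : ℕ)
    (h : ∀ n, M.run x (k + n) = M.run y n) : M.Accepts x ↔ M.Accepts y := by
  constructor
  · rintro ⟨q, hq, hinf⟩
    refine ⟨q, hq, fun N => ?_⟩
    obtain ⟨n, hn, he⟩ := hinf (k + N)
    refine ⟨n - k, by omega, ?_⟩
    rw [← h]
    have : k + (n - k) = n := by omega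
    rw [this]; exact he
  · rintro ⟨q, hq, hinf⟩
    refine ⟨q, hq, fun N => ?_⟩
    obtain ⟨n, hn, he⟩ := hinf N
    exact ⟨k + n, by omega, by rw [h]; exact he⟩

lemma run_init_of_const (M : DBA A Q) (a : A) (h : M.delta M.init a = M.init)
    (x : ℕ → A) : ∀ m : ℕ, (∀ j < m, x j = a) → M.run x m = M.init := by
  intro m
  induction m with
  | zero => intro _; rfl
  | succ m ih =>
      intro hx
      rw [run_succ, ih (fun j hj => hx j (by omega)), hx m (by omega), h]

lemma cat_append (p u : List A) (w : ℕ → A) (n : ℕ) :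
    cat (p ++ u) w (p.length + n) = cat u w n := by
  unfold cat
  by_cases h : n < u.length
  · rw [dif_pos h, dif_pos (by simp; omega)]
    simp [List.getElem_append_right, Nat.le_add_right]
  · rw [dif_neg h, dif_neg (by simp; omega)]
    congr 1
    simp
    omega

lemma encWord_append_shift {b d : ℕ} (p u : List (Fin d → Fin b)) (w : ℕ → Fin d → Fin b)
    (n : ℕ) : encWord (p ++ u) w (p.length + n) = encWord u w n := by
  have h1 : encWord (p ++ u) w = cat (p.map some ++ (u.map some ++ [none]))
      (fun n => some (w n)) := by
    unfold encWord; rw [List.map_append, List.append_assoc]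
  rw [h1]
  have h2 : p.length = (p.map some).length := by simp
  rw [h2, cat_append]
  rfl

lemma encWord_lt {b d : ℕ} (u : List (Fin d → Fin b)) (w : ℕ → Fin d → Fin b)
    {j : ℕ} (hj : j < u.length) : encWord u w j = some (u.get ⟨j, hj⟩) := by
  unfold encWord cat
  rw [dif_pos (by simp; omega)]
  rw [List.get_eq_getElem, List.getElem_append_left (by simp; omega)]
  simp

lemma run_pad (M : DBA (Option (Fin d → Fin b)) Q) {z : Fin d → Fin b}
    (hinit : M.delta M.init (some z) = M.init) (m : ℕ)
    (u : List (Fin d → Fin b)) (w : ℕ → Fin d → Fin b) (n : ℕ) :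
    M.run (encWord (List.replicate m z ++ u) w) (m + n) = M.run (encWord u w) n := by
  have hlen : (List.replicate m z).length = m := by simp
  apply run_shift
  · intro n'
    have := encWord_append_shift (List.replicate m z) u w n'
    rwa [hlen] at this
  · apply run_init_of_const M (some z) hinit
    intro j hj
    have hj' : j < (List.replicate m z ++ u).length := by simp; omega
    rw [encWord_lt _ _ hj']
    congr 1
    rw [List.get_eq_getElem, List.getElem_append_left (by simpa using hj)]
    simp

lemma mem_lang_pad {b d : ℕ} (M : DBA (Option (Fin d → Fin b)) Q) {z : Fin d → Fin b}
    (hinit : M.delta M.init (some z) = M.init) (m : ℕ)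
    (u : List (Fin d → Fin b)) (w : ℕ → Fin d → Fin b) :
    encWord (List.replicate m z ++ u) w ∈ M.Lang ↔ encWord u w ∈ M.Lang :=
  accepts_shift M _ _ m (run_pad M hinit m u w)

lemma natVal_cons_zero {b : ℕ} (z : Fin b) (hz : (z : ℕ) = 0) (v : List (Fin b)) :
    natVal b (z :: v) = natVal b v := by
  unfold natVal
  rw [show ∑ i : Fin (z :: v).length, ((((z :: v).get i : ℕ)) : ℝ) * (b:ℝ) ^ ((z :: v).length - 1 - (i:ℕ)) = ∑ i : Fin (v.length + 1), ((((z :: v).get i : ℕ)) : ℝ) * (b:ℝ) ^ (v.length + 1 - 1 - (i:ℕ)) from rfl, Fin.sum_univ_succ]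
  have h0 : ((((z :: v).get (0 : Fin (v.length + 1)) : ℕ)) : ℝ) = 0 := by simp [hz]
  rw [h0, zero_mul, zero_add]
  apply Finset.sum_congr rfl
  intro i _
  show ((v.get i : ℕ) : ℝ) * (b:ℝ) ^ (v.length + 1 - 1 - ((i:ℕ)+1)) = _
  congr 2
  omega

lemma natVal_replicate_zero {b : ℕ} (z : Fin b) (hz : (z : ℕ) = 0) (m : ℕ)
    (v : List (Fin b)) : natVal b (List.replicate m z ++ v) = natVal b v := by
  induction m with
  | zero => simp
  | succ m ih => rw [List.replicate_succ, List.cons_append, natVal_cons_zero z hz, ih]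

lemma vecVal_pad {b d : ℕ} (z : Fin d → Fin b) (hz : ∀ i, ((z i : ℕ)) = 0) (m : ℕ)
    (u : List (Fin d → Fin b)) (w : ℕ → Fin d → Fin b) :
    vecVal (List.replicate m z ++ u) w = vecVal u w := by
  funext i
  unfold vecVal
  congr 1
  rw [List.map_append, List.map_replicate]
  exact natVal_replicate_zero _ (hz i) m _

/-- Mix two tuples: components below `k` from the second, others from the first. -/
def mixT {b d : ℕ} (k : ℕ) (t t' : Fin d → Fin b) : Fin d → Fin b :=
  fun i => if (i : ℕ) < k then t' i else t i

lemma mix_length {b d : ℕ} (k : ℕ) {u u' : List (Fin d → Fin b)}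
    (hlen : u.length = u'.length) :
    (List.zipWith (mixT k) u u').length = u.length := by simp [hlen]

lemma mix_comp_map {b d : ℕ} (k : ℕ) {u u' : List (Fin d → Fin b)}
    (hlen : u.length = u'.length) (f : Fin d) :
    (List.zipWith (mixT k) u u').map (fun t => t f) =
      if (f : ℕ) < k then u'.map (fun t => t f) else u.map (fun t => t f) := by
  split <;> rename_i h
  · apply List.ext_getElem (by simp; omega)
    intro j h1 h2
    simp [mixT, h]
  · apply List.ext_getElem (by simp; omega)
    intro j h1 h2
    simp [mixT, h]

lemma mix_comp_fun {b d : ℕ} (k : ℕ) (w w' : ℕ → Fin d → Fin b) (f : Fin d) :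
    (fun n => mixT k (w n) (w' n) f) =
      if (f : ℕ) < k then (fun n => w' n f) else (fun n => w n f) := by
  split <;> rename_i h <;> funext n <;> simp [mixT, h]

lemma mix_zero {b d : ℕ} {u u' : List (Fin d → Fin b)} (hlen : u.length = u'.length) :
    List.zipWith (mixT 0) u u' = u := by
  apply List.ext_getElem (by simp; omega)
  intro j h1 h2
  simp only [List.getElem_zipWith]
  funext i; simp [mixT]

lemma mixT_zero {b d : ℕ} (t t' : Fin d → Fin b) : mixT 0 t t' = t := by
  funext i; simp [mixT]

lemma mixT_top {b d : ℕ} {k : ℕ} (hk : d ≤ k) (t t' : Fin d → Fin b) :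
    mixT k t t' = t' := by
  funext i; simp [mixT]; omega

lemma mix_top {b d : ℕ} {k : ℕ} (hk : d ≤ k) {u u' : List (Fin d → Fin b)}
    (hlen : u.length = u'.length) : List.zipWith (mixT k) u u' = u' := by
  apply List.ext_getElem (by simp; omega)
  intro j h1 h2
  simp only [List.getElem_zipWith]
  rw [mixT_top hk]

lemma mix_vecVal {b d : ℕ} (k : ℕ) {u u' : List (Fin d → Fin b)}
    {w w' : ℕ → Fin d → Fin b} (hlen : u.length = u'.length)
    (hval : vecVal u w = vecVal u' w') :
    vecVal (List.zipWith (mixT k) u u') (fun n => mixT k (w n) (w' n)) = vecVal u w := by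
  funext f
  unfold vecVal
  rw [mix_comp_map k hlen f, mix_comp_fun k w w' f]
  by_cases h : (f : ℕ) < k
  · rw [if_pos h, if_pos h]
    exact (congrFun hval f).symm
  · rw [if_neg h, if_neg h]

lemma mixT_succ_of_eq {b d : ℕ} {k : ℕ} (hk : k < d) (t t' : Fin d → Fin b)
    (h : t ⟨k, hk⟩ = t' ⟨k, hk⟩) : mixT (k + 1) t t' = mixT k t t' := by
  funext i
  simp only [mixT]
  by_cases hik : (i : ℕ) < k
  · rw [if_pos (by omega), if_pos hik]
  · by_cases hik2 : (i : ℕ) = k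
    · have hi : i = ⟨k, hk⟩ := Fin.ext hik2
      rw [if_pos (by omega), if_neg hik, hi, h]
    · rw [if_neg (by omega), if_neg hik]

lemma mix_succ_of_eq {b d : ℕ} {k : ℕ} (hk : k < d) {u u' : List (Fin d → Fin b)}
    (hlen : u.length = u'.length)
    (hequ : u.map (fun t => t ⟨k, hk⟩) = u'.map (fun t => t ⟨k, hk⟩)) :
    List.zipWith (mixT (k + 1)) u u' = List.zipWith (mixT k) u u' := by
  apply List.ext_getElem (by simp)
  intro j h1 h2
  have h2u : j < u.length := by simp at h2; omega
  simp only [List.getElem_zipWith]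
  apply mixT_succ_of_eq hk
  have h4 : (u.map (fun t => t ⟨k, hk⟩))[j]'(by simpa using h2u) =
      (u'.map (fun t => t ⟨k, hk⟩))[j]'(by simp; omega) :=
    List.getElem_of_eq hequ _
  simpa using h4

lemma mixW_succ_of_eq {b d : ℕ} {k : ℕ} (hk : k < d) (w w' : ℕ → Fin d → Fin b)
    (heqw : (fun n => w n ⟨k, hk⟩) = (fun n => w' n ⟨k, hk⟩)) :
    (fun n => mixT (k + 1) (w n) (w' n)) = (fun n => mixT k (w n) (w' n)) :=
  funext fun n => mixT_succ_of_eq hk _ _ (congrFun heqw n)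

end Stmt11Aux
/-- equivalence of saturation with its restrictions to words whose
natural parts have the same length, resp. which moreover differ in exactly one
component. -/
theorem stmt11 {Q : Type} [Fintype Q] {b d : ℕ} (hb : 2 ≤ b) (hd : 0 < d)
    (M : DBA (Option (Fin d → Fin b)) Q) (hweak : M.Weak) (hmin : M.Minimal)
    (hshape : ∀ x ∈ M.Lang, ∃ u w, x = encWord u w)
    (hinit : M.delta M.init (some fun _ => (⟨0, by omega⟩ : Fin b)) = M.init) :
    (Saturated M.Lang ↔
      (∀ (u : List (Fin d → Fin b)) (w : ℕ → Fin d → Fin b)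
         (u' : List (Fin d → Fin b)) (w' : ℕ → Fin d → Fin b),
        u.length = u'.length → vecVal u w = vecVal u' w' →
        encWord u w ∈ M.Lang → encWord u' w' ∈ M.Lang)) ∧
    ((∀ (u : List (Fin d → Fin b)) (w : ℕ → Fin d → Fin b)
        (u' : List (Fin d → Fin b)) (w' : ℕ → Fin d → Fin b),
        u.length = u'.length → vecVal u w = vecVal u' w' →
        encWord u w ∈ M.Lang → encWord u' w' ∈ M.Lang) ↔
      (∀ (u : List (Fin d → Fin b)) (w : ℕ → Fin d → Fin b)
         (u' : List (Fin d → Fin b)) (w' : ℕ → Fin d → Fin b),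
        u.length = u'.length → vecVal u w = vecVal u' w' →
        (∃! f : Fin d, ¬ (u.map (fun t => t f) = u'.map (fun t => t f) ∧
            (fun n => w n f) = (fun n => w' n f))) →
        encWord u w ∈ M.Lang → encWord u' w' ∈ M.Lang)) := by
  classical
  open Stmt11Aux in
  have z0 : Fin d → Fin b := fun _ => ⟨0, by omega⟩
  -- (2) → (1)
  have h21 : (∀ (u : List (Fin d → Fin b)) (w : ℕ → Fin d → Fin b)
        (u' : List (Fin d → Fin b)) (w' : ℕ → Fin d → Fin b),
        u.length = u'.length → vecVal u w = vecVal u' w' →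
        encWord u w ∈ M.Lang → encWord u' w' ∈ M.Lang) → Saturated M.Lang := by
    intro h2 u w u' w' hval hmem
    have e1 := (Stmt11Aux.mem_lang_pad (z := fun _ => (⟨0, by omega⟩ : Fin b)) M hinit (u'.length - u.length) u w).mpr hmem
    have e2 := h2 (List.replicate (u'.length - u.length) (fun _ => (⟨0, by omega⟩ : Fin b)) ++ u) w
      (List.replicate (u.length - u'.length) (fun _ => (⟨0, by omega⟩ : Fin b)) ++ u') w'
      (by simp; omega)
      (by rw [Stmt11Aux.vecVal_pad _ (fun i => rfl), Stmt11Aux.vecVal_pad _ (fun i => rfl)]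
          exact hval) e1
    exact (Stmt11Aux.mem_lang_pad (z := fun _ => (⟨0, by omega⟩ : Fin b)) M hinit (u.length - u'.length) u' w').mp e2
  -- (3) → (2)
  have h32 : (∀ (u : List (Fin d → Fin b)) (w : ℕ → Fin d → Fin b)
         (u' : List (Fin d → Fin b)) (w' : ℕ → Fin d → Fin b),
        u.length = u'.length → vecVal u w = vecVal u' w' →
        (∃! f : Fin d, ¬ (u.map (fun t => t f) = u'.map (fun t => t f) ∧
            (fun n => w n f) = (fun n => w' n f))) →
        encWord u w ∈ M.Lang → encWord u' w' ∈ M.Lang) →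
      (∀ (u : List (Fin d → Fin b)) (w : ℕ → Fin d → Fin b)
        (u' : List (Fin d → Fin b)) (w' : ℕ → Fin d → Fin b),
        u.length = u'.length → vecVal u w = vecVal u' w' →
        encWord u w ∈ M.Lang → encWord u' w' ∈ M.Lang) := by
    intro h3 u w u' w' hlen hval hmem
    have key : ∀ k : ℕ, encWord (List.zipWith (Stmt11Aux.mixT k) u u')
        (fun n => Stmt11Aux.mixT k (w n) (w' n)) ∈ M.Lang := by
      intro k
      induction k with
      | zero =>
          rw [Stmt11Aux.mix_zero hlen,
            show (fun n => Stmt11Aux.mixT 0 (w n) (w' n)) = w from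
              funext fun n => Stmt11Aux.mixT_zero _ _]
          exact hmem
      | succ k ih =>
          by_cases hk : k < d
          · by_cases heq : u.map (fun t => t ⟨k, hk⟩) = u'.map (fun t => t ⟨k, hk⟩) ∧
                (fun n => w n ⟨k, hk⟩) = (fun n => w' n ⟨k, hk⟩)
            · rw [Stmt11Aux.mix_succ_of_eq hk hlen heq.1,
                Stmt11Aux.mixW_succ_of_eq hk w w' heq.2]
              exact ih
            · refine h3 _ _ _ _ ?_ ?_ ?_ ih
              · rw [Stmt11Aux.mix_length k hlen, Stmt11Aux.mix_length (k+1) hlen]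
              · rw [Stmt11Aux.mix_vecVal k hlen hval, Stmt11Aux.mix_vecVal (k+1) hlen hval]
              · refine ⟨⟨k, hk⟩, ?_, ?_⟩
                · beta_reduce
                  rw [Stmt11Aux.mix_comp_map k hlen ⟨k, hk⟩,
                    Stmt11Aux.mix_comp_map (k+1) hlen ⟨k, hk⟩,
                    Stmt11Aux.mix_comp_fun k w w' ⟨k, hk⟩,
                    Stmt11Aux.mix_comp_fun (k+1) w w' ⟨k, hk⟩,
                    if_neg (Nat.lt_irrefl k), if_neg (Nat.lt_irrefl k),
                    if_pos (Nat.lt_succ_self k), if_pos (Nat.lt_succ_self k)]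
                  exact heq
                · intro g hg
                  beta_reduce at hg
                  by_contra hne
                  apply hg
                  have hgk : (g : ℕ) ≠ k := fun h => hne (Fin.ext h)
                  constructor
                  · rw [Stmt11Aux.mix_comp_map k hlen g, Stmt11Aux.mix_comp_map (k+1) hlen g]
                    by_cases hgl : (g : ℕ) < k
                    · rw [if_pos hgl, if_pos (by omega)]
                    · rw [if_neg hgl, if_neg (by omega)]
                  · rw [Stmt11Aux.mix_comp_fun k w w' g, Stmt11Aux.mix_comp_fun (k+1) w w' g]
                    by_cases hgl : (g : ℕ) < k
                    · rw [if_pos hgl, if_pos (by omega)]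
                    · rw [if_neg hgl, if_neg (by omega)]
          · rw [Stmt11Aux.mix_top (show d ≤ k + 1 by omega) hlen,
              show (fun n => Stmt11Aux.mixT (k+1) (w n) (w' n)) = w' from
                funext fun n => Stmt11Aux.mixT_top (by omega) _ _,
              ← Stmt11Aux.mix_top (show d ≤ k by omega) hlen,
              ← show (fun n => Stmt11Aux.mixT k (w n) (w' n)) = w' from
                funext fun n => Stmt11Aux.mixT_top (by omega) _ _]
            exact ih
    have := key d
    rw [Stmt11Aux.mix_top (le_refl d) hlen,
      show (fun n => Stmt11Aux.mixT d (w n) (w' n)) = w' from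
        funext fun n => Stmt11Aux.mixT_top (le_refl d) _ _] at this
    exact this
  exact ⟨⟨fun hsat u w u' w' _ hval hmem => hsat u w u' w' hval hmem, h21⟩,
    ⟨fun h2 u w u' w' hlen hval _ hmem => h2 u w u' w' hlen hval hmem, h32⟩⟩
end
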